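/- Let G be a Δ-regular finite simple graph of order n ≥ 1. Then 1 ≤ A_Δ(G) ≤ n/(Δ+1). Furthermore, G is connected if and only if A_Δ(G) = 1. -/

import Mathlib

open Polynomial Finset

/-- Number of neighbors of `v` inside the set `S` (denoted δ_S(v)). -/
def SimpleGraph.degIn {V : Type*} [Fintype V] [DecidableEq V]
    (G : SimpleGraph V) [DecidableRel G.Adj] (S : Finset V) (v : V) : ℕ :=
  (S.filter (fun u => G.Adj v u)).card

/-- Number of neighbors of `v` outside the set `S` (denoted δ_{S̄}(v)). -/
def SimpleGraph.degOut {V : Type*} [Fintype V] [DecidableEq V]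
    (G : SimpleGraph V) [DecidableRel G.Adj] (S : Finset V) (v : V) : ℕ :=
  (Sᶜ.filter (fun u => G.Adj v u)).card

/-- `S` is an exact defensive `k`-alliance in `G`: the induced subgraph `⟨S⟩` is connected
(in particular `S` is nonempty) and `k = k_S = min_{v ∈ S} (δ_S(v) - δ_{S̄}(v))`. -/
def SimpleGraph.IsExactAlliance {V : Type*} [Fintype V] [DecidableEq V]
    (G : SimpleGraph V) [DecidableRel G.Adj] (S : Finset V) (k : ℤ) : Prop :=
  (G.induce (S : Set V)).Connected ∧
    (∀ v ∈ S, k ≤ (G.degIn S v : ℤ) - (G.degOut S v : ℤ)) ∧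
    (∃ v ∈ S, (G.degIn S v : ℤ) - (G.degOut S v : ℤ) = k)

/-- `A_k(G)`: the number of exact defensive `k`-alliances in `G`. -/
noncomputable def SimpleGraph.allianceCoeff {V : Type*} [Fintype V] [DecidableEq V]
    (G : SimpleGraph V) [DecidableRel G.Adj] (k : ℤ) : ℕ :=
  Set.ncard {S : Finset V | G.IsExactAlliance S k}

/-- The alliance polynomial `A(G;x) = Σ_{k=-Δ}^{Δ} A_k(G) x^{n+k}`, where `n` is the order and
`Δ` the maximum degree of `G`, regarded as a real polynomial. -/
noncomputable def SimpleGraph.alliancePoly {V : Type*} [Fintype V] [DecidableEq V]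
    (G : SimpleGraph V) [DecidableRel G.Adj] : Polynomial ℝ :=
  ∑ k ∈ Finset.Icc (-(G.maxDegree : ℤ)) (G.maxDegree : ℤ),
    (G.allianceCoeff k : ℝ) • X ^ (((Fintype.card V : ℤ) + k).toNat)

section Aux

set_option linter.unusedSectionVars false

variable {V : Type*} [Fintype V] [DecidableEq V] (G : SimpleGraph V) [DecidableRel G.Adj]

lemma degIn_add_degOut (S : Finset V) (v : V) :
    G.degIn S v + G.degOut S v = G.degree v := by
  classical
  rw [SimpleGraph.degIn, SimpleGraph.degOut, ← Finset.card_union_of_disjoint, ← Finset.filter_union,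
    Finset.union_compl]
  · rw [SimpleGraph.degree, SimpleGraph.neighborFinset_eq_filter]
  · exact Finset.disjoint_filter_filter (disjoint_compl_right)

lemma degOut_eq_zero_iff (S : Finset V) (v : V) :
    G.degOut S v = 0 ↔ ∀ u, G.Adj v u → u ∈ S := by
  simp only [SimpleGraph.degOut, Finset.card_eq_zero, Finset.filter_eq_empty_iff,
    Finset.mem_compl]
  constructor
  · intro h u hadj
    by_contra hu
    exact h hu hadj
  · intro h u hu hadj
    exact hu (h u hadj)

lemma walk_closed (S : Finset V) (hS : ∀ v ∈ S, G.degOut S v = 0) {u w : V}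
    (p : G.Walk u w) (hu : u ∈ S) : w ∈ S := by
  induction p with
  | nil => exact hu
  | cons h p ih =>
    exact ih (((degOut_eq_zero_iff G S _).mp (hS _ hu)) _ h)

lemma connected_induce_supp (c : G.ConnectedComponent) :
    (G.induce c.supp).Connected := by
  rw [SimpleGraph.connected_iff]
  constructor
  · rintro ⟨u, hu⟩ ⟨w, hw⟩
    rw [SimpleGraph.ConnectedComponent.mem_supp_iff] at hu hw
    have hr : G.Reachable u w := SimpleGraph.ConnectedComponent.exact (hu.trans hw.symm)
    obtain ⟨p⟩ := hr
    have hsub : {x | x ∈ p.support} ⊆ c.supp := by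
      intro x hx
      rw [SimpleGraph.ConnectedComponent.mem_supp_iff]
      have : G.Reachable u x := (p.takeUntil x hx).reachable
      rw [← hu]
      exact (SimpleGraph.ConnectedComponent.sound this).symm
    have hc := p.connected_induce_support
    have r' := hc ⟨u, p.start_mem_support⟩ ⟨w, p.end_mem_support⟩
    have := r'.map (G.induceHomOfLE hsub).toHom
    convert this using 2 <;> rfl
  · obtain ⟨v, hv⟩ := c.exists_rep
    exact ⟨⟨v, by rw [SimpleGraph.ConnectedComponent.mem_supp_iff]; exact hv⟩⟩

lemma isExactAlliance_reg_iff {Δ : ℕ} (hreg : G.IsRegularOfDegree Δ) (S : Finset V) :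
    G.IsExactAlliance S (Δ : ℤ) ↔ ∃ c : G.ConnectedComponent, S = c.supp.toFinset := by
  constructor
  · rintro ⟨hconn, hmin, v, hv, -⟩
    have hout : ∀ u ∈ S, G.degOut S u = 0 := by
      intro u hu
      have h1 := hmin u hu
      have h2 := degIn_add_degOut G S u
      rw [hreg u] at h2
      omega
    refine ⟨G.connectedComponentMk v, ?_⟩
    ext u
    simp only [Set.mem_toFinset, SimpleGraph.ConnectedComponent.mem_supp_iff,
      SimpleGraph.ConnectedComponent.eq]
    constructor
    · intro hu
      have hr := hconn ⟨u, by exact_mod_cast hu⟩ ⟨v, by exact_mod_cast hv⟩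
      exact hr.map (SimpleGraph.Embedding.induce _).toHom
    · intro hr
      obtain ⟨p⟩ := hr.symm
      exact walk_closed G S hout p hv
  · rintro ⟨c, rfl⟩
    have hmem : ∀ u : V, u ∈ c.supp.toFinset ↔ G.connectedComponentMk u = c := by
      intro u
      simp [SimpleGraph.ConnectedComponent.mem_supp_iff]
    have hout : ∀ u ∈ c.supp.toFinset, G.degOut c.supp.toFinset u = 0 := by
      intro u hu
      rw [degOut_eq_zero_iff]
      intro x hadj
      rw [hmem] at hu ⊢
      rw [← hu]
      exact SimpleGraph.ConnectedComponent.sound hadj.symm.reachable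
    have hin : ∀ u ∈ c.supp.toFinset, G.degIn c.supp.toFinset u = Δ := by
      intro u hu
      have h2 := degIn_add_degOut G c.supp.toFinset u
      rw [hreg u] at h2
      have := hout u hu
      omega
    obtain ⟨v, hv⟩ := c.exists_rep
    have hvS : v ∈ c.supp.toFinset := (hmem v).mpr hv
    refine ⟨?_, ?_, v, hvS, ?_⟩
    · have := connected_induce_supp G c
      rwa [Set.coe_toFinset]
    · intro u hu
      rw [hin u hu, hout u hu]
      simp
    · rw [hin v hvS, hout v hvS]
      simp

lemma allianceCoeff_eq_card_components {Δ : ℕ} (hreg : G.IsRegularOfDegree Δ) :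
    G.allianceCoeff (Δ : ℤ) = Fintype.card G.ConnectedComponent := by
  have hset : {S : Finset V | G.IsExactAlliance S (Δ : ℤ)} =
      Set.range (fun c : G.ConnectedComponent => c.supp.toFinset) := by
    ext S
    simp only [Set.mem_setOf_eq, Set.mem_range, isExactAlliance_reg_iff G hreg]
    exact exists_congr fun c => eq_comm
  have hinj : Function.Injective (fun c : G.ConnectedComponent => c.supp.toFinset) := by
    intro a b h
    exact SimpleGraph.ConnectedComponent.supp_injective (by simpa [Set.toFinset_inj] using h)
  rw [SimpleGraph.allianceCoeff, hset, ← Set.image_univ,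
    Set.ncard_image_of_injective _ hinj, Set.ncard_univ, Nat.card_eq_fintype_card]

lemma card_supp_ge {Δ : ℕ} (hreg : G.IsRegularOfDegree Δ) (c : G.ConnectedComponent) :
    Δ + 1 ≤ c.supp.toFinset.card := by
  obtain ⟨v, hv⟩ := c.exists_rep
  have hvc : G.connectedComponentMk v = c := hv
  have hsub : insert v (G.neighborFinset v) ⊆ c.supp.toFinset := by
    intro x hx
    rw [Finset.mem_insert] at hx
    simp only [Set.mem_toFinset, SimpleGraph.ConnectedComponent.mem_supp_iff]
    rcases hx with rfl | hx
    · exact hvc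
    · rw [← hvc]
      exact SimpleGraph.ConnectedComponent.sound
        ((G.mem_neighborFinset v x).mp hx).symm.reachable
  have hcard : (insert v (G.neighborFinset v)).card = Δ + 1 := by
    rw [Finset.card_insert_of_notMem (by simp), SimpleGraph.card_neighborFinset_eq_degree,
      hreg v]
  rw [← hcard]
  exact Finset.card_le_card hsub

lemma sum_card_supp :
    ∑ c : G.ConnectedComponent, c.supp.toFinset.card = Fintype.card V := by
  classical
  rw [← Finset.card_univ,
    Finset.card_eq_sum_card_fiberwise (f := G.connectedComponentMk)
      (fun x _ => Finset.mem_univ _)]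
  refine Finset.sum_congr rfl fun c _ => ?_
  congr 1
  ext v
  simp [SimpleGraph.ConnectedComponent.mem_supp_iff]

end Aux

/-- For a Δ-regular graph of order `n ≥ 1`, `1 ≤ A_Δ(G) ≤ n/(Δ+1)`, and `G` is
connected iff `A_Δ(G) = 1`. -/
theorem allianceCoeff_maxDeg_bounds_and_connected_iff
    {V : Type*} [Fintype V] [DecidableEq V] [Nonempty V]
    (G : SimpleGraph V) [DecidableRel G.Adj] (Δ : ℕ)
    (hreg : G.IsRegularOfDegree Δ) :
    (1 ≤ G.allianceCoeff (Δ : ℤ) ∧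
      (G.allianceCoeff (Δ : ℤ) : ℚ) ≤ (Fintype.card V : ℚ) / ((Δ : ℚ) + 1)) ∧
    (G.Connected ↔ G.allianceCoeff (Δ : ℤ) = 1) := by
  classical
  rw [allianceCoeff_eq_card_components G hreg]
  have : Nonempty G.ConnectedComponent := ⟨G.connectedComponentMk (Classical.arbitrary V)⟩
  have hpos : 0 < Fintype.card G.ConnectedComponent := Fintype.card_pos
  have hmul : Fintype.card G.ConnectedComponent * (Δ + 1) ≤ Fintype.card V := by
    calc Fintype.card G.ConnectedComponent * (Δ + 1)
        = ∑ _c : G.ConnectedComponent, (Δ + 1) := by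
          rw [Finset.sum_const, Finset.card_univ, smul_eq_mul]
      _ ≤ ∑ c : G.ConnectedComponent, c.supp.toFinset.card :=
          Finset.sum_le_sum fun c _ => card_supp_ge G hreg c
      _ = Fintype.card V := sum_card_supp G
  refine ⟨⟨hpos, ?_⟩, ?_⟩
  · rw [le_div_iff₀ (by positivity)]
    calc (Fintype.card G.ConnectedComponent : ℚ) * ((Δ : ℚ) + 1)
        = ((Fintype.card G.ConnectedComponent * (Δ + 1) : ℕ) : ℚ) := by push_cast; ring
      _ ≤ (Fintype.card V : ℚ) := by exact_mod_cast hmul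
  · constructor
    · intro hconn
      have : Subsingleton G.ConnectedComponent :=
        hconn.preconnected.subsingleton_connectedComponent
      exact Fintype.card_eq_one_iff.mpr
        ⟨G.connectedComponentMk (Classical.arbitrary V), fun y => Subsingleton.elim _ _⟩
    · intro hcard
      have hsub : Subsingleton G.ConnectedComponent :=
        Fintype.card_le_one_iff_subsingleton.mp hcard.le
      refine ⟨fun u v => ?_⟩
      exact (SimpleGraph.ConnectedComponent.eq).mp
        (Subsingleton.elim (G.connectedComponentMk u) (G.connectedComponentMk v))
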